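/- arXiv:2405.01370 — 2 statements merged into one kernel-verified Lean document; each statement's English description precedes it below -/
import Mathlib

section
/- Let L be an invertible real n×n matrix and r ∈ ℤⁿ. Then the number of lattice points κ ∈ ℤⁿ such that Lκ lies in the cube Q_r := r + [0,1]ⁿ is at most ∏_{j=1}^{n} ( ⌊ Σ_{i=1}^{n} |(L^{−1})_{j i}| ⌋ + 1 ), i.e. the product over the rows of L^{−1} of one plus the integer part of the ℓ¹-norm of the row. -/
open MeasureTheory Matrix Filter
open scoped ENNReal NNReal

noncomputable section

/-- for an invertible real `n×n` matrix `L` and `r ∈ ℤⁿ`, the set of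
lattice points `κ ∈ ℤⁿ` with `Lκ ∈ Q_r = r + [0,1]ⁿ` is finite, with at most
`∏ⱼ (⌊∑ᵢ |(L⁻¹)ⱼᵢ|⌋ + 1)` elements. -/
theorem stmt8 {n : ℕ} (L : Matrix (Fin n) (Fin n) ℝ) (hL : IsUnit L.det)
    (r : Fin n → ℤ) :
    {κ : Fin n → ℤ | ∀ i : Fin n,
        (r i : ℝ) ≤ L.mulVec (fun j => (κ j : ℝ)) i
          ∧ L.mulVec (fun j => (κ j : ℝ)) i ≤ (r i : ℝ) + 1}.Finite
    ∧ ({κ : Fin n → ℤ | ∀ i : Fin n,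
          (r i : ℝ) ≤ L.mulVec (fun j => (κ j : ℝ)) i
            ∧ L.mulVec (fun j => (κ j : ℝ)) i ≤ (r i : ℝ) + 1}.ncard : ℤ)
        ≤ ∏ j : Fin n, (⌊∑ i : Fin n, |L⁻¹ j i|⌋ + 1) := by
  classical
  set A : Matrix (Fin n) (Fin n) ℝ := L⁻¹ with hA
  -- lower and upper endpoints of the interval containing κ j
  set a : Fin n → ℝ := fun j => (∑ i, A j i * r i) + ∑ i, min (A j i) 0 with ha
  set b : Fin n → ℝ := fun j => (∑ i, A j i * r i) + ∑ i, max (A j i) 0 with hb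
  set m : Fin n → ℤ := fun j => ⌈a j⌉ with hm
  set M : Fin n → ℤ := fun j => ⌊b j⌋ with hM
  have hinv : ∀ x : Fin n → ℝ, A.mulVec (L.mulVec x) = x := by
    intro x
    rw [hA, Matrix.mulVec_mulVec, Matrix.nonsing_inv_mul L hL, Matrix.one_mulVec]
  have hsub : {κ : Fin n → ℤ | ∀ i : Fin n,
        (r i : ℝ) ≤ L.mulVec (fun j => (κ j : ℝ)) i
          ∧ L.mulVec (fun j => (κ j : ℝ)) i ≤ (r i : ℝ) + 1}
      ⊆ ↑(Finset.Icc m M) := by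
    intro κ hκ
    simp only [Finset.coe_Icc, Set.mem_Icc, Pi.le_def]
    set t : Fin n → ℝ := L.mulVec (fun j => (κ j : ℝ)) with ht
    have hκt : ∀ j, (κ j : ℝ) = ∑ i, A j i * t i := by
      intro j
      have := congrFun (hinv (fun j => (κ j : ℝ))) j
      rw [← this]
      simp [Matrix.mulVec, dotProduct, ht]
    have hlow : ∀ j, a j ≤ (κ j : ℝ) := by
      intro j
      rw [hκt j, ha]
      simp only
      rw [← Finset.sum_add_distrib]
      refine Finset.sum_le_sum fun i _ => ?_
      rcases le_or_gt 0 (A j i) with h | h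
      · have h1 := (hκ i).1
        nlinarith [min_le_right (A j i) (0:ℝ)]
      · have h2 := (hκ i).2
        have : min (A j i) 0 = A j i := min_eq_left h.le
        nlinarith
    have hhigh : ∀ j, (κ j : ℝ) ≤ b j := by
      intro j
      rw [hκt j, hb]
      simp only
      rw [← Finset.sum_add_distrib]
      refine Finset.sum_le_sum fun i _ => ?_
      rcases le_or_gt 0 (A j i) with h | h
      · have h2 := (hκ i).2
        have : max (A j i) 0 = A j i := max_eq_left h
        nlinarith
      · have h1 := (hκ i).1
        nlinarith [le_max_right (A j i) (0:ℝ)]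
    constructor
    · intro j; exact Int.ceil_le.mpr (by exact_mod_cast hlow j)
    · intro j; exact Int.le_floor.mpr (by exact_mod_cast hhigh j)
  have hfin : {κ : Fin n → ℤ | ∀ i : Fin n,
        (r i : ℝ) ≤ L.mulVec (fun j => (κ j : ℝ)) i
          ∧ L.mulVec (fun j => (κ j : ℝ)) i ≤ (r i : ℝ) + 1}.Finite :=
    Set.Finite.subset (Finset.finite_toSet _) hsub
  refine ⟨hfin, ?_⟩
  have h1 : {κ : Fin n → ℤ | ∀ i : Fin n,
        (r i : ℝ) ≤ L.mulVec (fun j => (κ j : ℝ)) i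
          ∧ L.mulVec (fun j => (κ j : ℝ)) i ≤ (r i : ℝ) + 1}.ncard
      ≤ (Finset.Icc m M).card := by
    rw [← Set.ncard_coe_finset]
    exact Set.ncard_le_ncard hsub (Finset.finite_toSet _)
  have hfactor : ∀ j : Fin n,
      ((Finset.Icc (m j) (M j)).card : ℤ) ≤ ⌊∑ i, |A j i|⌋ + 1 := by
    intro j
    have hba : b j = a j + ∑ i, |A j i| := by
      have key : ∑ i, min (A j i) 0 + ∑ i, |A j i| = ∑ i, max (A j i) 0 := by
        rw [← Finset.sum_add_distrib]
        refine Finset.sum_congr rfl fun i _ => ?_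
        rcases le_or_gt 0 (A j i) with h | h
        · rw [max_eq_left h, min_eq_right h, abs_of_nonneg h]; ring
        · rw [max_eq_right h.le, min_eq_left h.le, abs_of_neg h]; ring
      rw [ha, hb]
      simp only
      rw [add_assoc, key]
    have hnn : (0:ℤ) ≤ ⌊∑ i, |A j i|⌋ := Int.floor_nonneg.mpr (by positivity)
    have hML : M j ≤ m j + ⌊∑ i, |A j i|⌋ := by
      rw [hM, hm]
      simp only
      rw [hba]
      calc ⌊a j + ∑ i, |A j i|⌋ ≤ ⌊(⌈a j⌉ : ℝ) + ∑ i, |A j i|⌋ :=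
            Int.floor_le_floor (add_le_add_left (Int.le_ceil _) _)
        _ = ⌈a j⌉ + ⌊∑ i, |A j i|⌋ := Int.floor_intCast_add _ _
    simp only [Int.card_Icc]
    obtain ⟨F, hF⟩ : ∃ F, ⌊∑ i, |A j i|⌋ = F := ⟨_, rfl⟩
    obtain ⟨P, hP⟩ : ∃ P, m j = P := ⟨_, rfl⟩
    obtain ⟨Q, hQ⟩ : ∃ Q, M j = Q := ⟨_, rfl⟩
    rw [hF] at hnn
    rw [hP, hQ, hF] at hML
    rw [hP, hQ, hF]
    clear hsub h1 hfin hba hF hP hQ hinv hM hm hb ha hA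
    clear M m b a A
    omega
  calc ({κ : Fin n → ℤ | ∀ i : Fin n,
          (r i : ℝ) ≤ L.mulVec (fun j => (κ j : ℝ)) i
            ∧ L.mulVec (fun j => (κ j : ℝ)) i ≤ (r i : ℝ) + 1}.ncard : ℤ)
      ≤ ((Finset.Icc m M).card : ℤ) := by exact_mod_cast h1
    _ = ∏ j, ((Finset.Icc (m j) (M j)).card : ℤ) := by
        rw [Pi.card_Icc]; push_cast; rfl
    _ ≤ ∏ j, (⌊∑ i, |A j i|⌋ + 1) :=
        Finset.prod_le_prod (fun j _ => by positivity) (fun j _ => hfactor j)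
    _ = ∏ j : Fin n, (⌊∑ i : Fin n, |L⁻¹ j i|⌋ + 1) := by rw [hA]
end
end

section
/- (Sampling inequality in weighted Wiener spaces.) Fix s ≥ 0 and let v(x) = (1+|x|)^s on ℝⁿ. Let f : ℝⁿ → ℂ be continuous with ‖f‖_{W(L¹_v)} := Σ_{r∈ℤⁿ} v(r) sup_{x∈Q_r} |f(x)| < ∞, where Q_r := r + [0,1]ⁿ. Then for every invertible real n×n matrix L, Σ_{κ∈ℤⁿ} v(Lκ) |f(Lκ)| ≤ C_{L,v} ‖f‖_{W(L¹_v)}, where C_{L,v} := M_v ∏_{j=1}^{n} ( ⌊ Σ_{i=1}^{n} |(L^{−1})_{j i}| ⌋ + 1 ) and M_v := max_{z∈[0,1]ⁿ} v(z). -/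
open MeasureTheory Matrix Filter
open scoped ENNReal NNReal

noncomputable section

/-- `ℝⁿ` with the Euclidean norm. -/
abbrev Euc (n : ℕ) := EuclideanSpace ℝ (Fin n)

/-- Turn a plain vector into a point of Euclidean space. -/
def toE {n : ℕ} (x : Fin n → ℝ) : Euc n := (EuclideanSpace.equiv (Fin n) ℝ).symm x

/-- The cube `Q_r = r + [0,1]ⁿ`. -/
def cube {n : ℕ} (r : Fin n → ℤ) : Set (Euc n) :=
  {x : Euc n | ∀ i, (r i : ℝ) ≤ x i ∧ x i ≤ (r i : ℝ) + 1}

/-- `sup_{x ∈ Q_r} |f(x)|`. -/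
def supCube {n : ℕ} (f : Euc n → ℂ) (r : Fin n → ℤ) : ℝ :=
  sSup ((fun x => ‖f x‖) '' cube r)

/-- The polynomial weight `v(x) = (1+|x|)^s`. -/
def polyW {n : ℕ} (s : ℝ) (x : Euc n) : ℝ := (1 + ‖x‖) ^ s

/-- `M_v = max_{z ∈ [0,1]ⁿ} v(z)`. -/
def Mv (n : ℕ) (s : ℝ) : ℝ :=
  sSup ((polyW s) '' {z : Euc n | ∀ i, z i ∈ Set.Icc (0:ℝ) 1})

lemma toE_apply {n : ℕ} (x : Fin n → ℝ) (i : Fin n) : toE x i = x i := rfl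

lemma counting {α β : Type*} (g : α → β) (h : β → ℝ≥0∞) (N : ℕ)
    (hfib : ∀ b : β, ∃ t : Finset α, t.card ≤ N ∧ g ⁻¹' {b} ⊆ t) :
    ∑' a, h (g a) ≤ N * ∑' b, h b := by
  rw [← ENNReal.tsum_fiberwise (fun a => h (g a)) g, ← ENNReal.tsum_mul_left]
  refine ENNReal.tsum_le_tsum fun b => ?_
  obtain ⟨t, htN, hsub⟩ := hfib b
  have hfin : (g ⁻¹' {b}).Finite := Set.Finite.subset t.finite_toSet hsub
  have : ∀ a : g ⁻¹' {b}, h (g a) = h b := fun a => by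
    have := a.2; simp only [Set.mem_preimage, Set.mem_singleton_iff] at this; rw [this]
  calc ∑' a : g ⁻¹' {b}, h (g a) = ∑' _a : g ⁻¹' {b}, h b := tsum_congr this
    _ = hfin.toFinset.card * h b := by
        haveI := hfin.fintype
        rw [tsum_fintype, Finset.sum_const, nsmul_eq_mul]
        congr 1
        rw [Set.Finite.card_toFinset, Finset.card_univ]
    _ ≤ N * h b := by
        gcongr
        exact_mod_cast le_trans (Finset.card_le_card (by simpa using hsub)) htN

lemma isCompact_boxSet {n : ℕ} (a b : Fin n → ℝ) :
    IsCompact {x : Euc n | ∀ i, a i ≤ x i ∧ x i ≤ b i} := by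
  have h1 : {x : Euc n | ∀ i, a i ≤ x i ∧ x i ≤ b i}
      = toE '' Set.univ.pi (fun i => Set.Icc (a i) (b i)) := by
    ext x
    constructor
    · intro hx
      exact ⟨fun i => x i, fun i _ => ⟨(hx i).1, (hx i).2⟩, rfl⟩
    · rintro ⟨y, hy, rfl⟩
      intro i
      exact hy i (Set.mem_univ i)
  rw [h1]
  exact ((isCompact_univ_pi fun i => isCompact_Icc).image
    (EuclideanSpace.equiv (Fin n) ℝ).symm.continuous)

lemma isCompact_cube {n : ℕ} (r : Fin n → ℤ) : IsCompact (cube r) :=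
  isCompact_boxSet (fun i => (r i : ℝ)) (fun i => (r i : ℝ) + 1)

lemma continuous_polyW {n : ℕ} {s : ℝ} (hs : 0 ≤ s) : Continuous (polyW s (n := n)) := by
  apply Continuous.rpow_const (by fun_prop)
  exact fun x => Or.inr hs

lemma polyW_nonneg {n : ℕ} {s : ℝ} (x : Euc n) : 0 ≤ polyW s x :=
  Real.rpow_nonneg (by positivity) s

lemma supCube_nonneg {n : ℕ} (f : Euc n → ℂ) (r : Fin n → ℤ) : 0 ≤ supCube f r :=
  Real.sSup_nonneg (by rintro x ⟨y, _, rfl⟩; positivity)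

lemma norm_le_supCube {n : ℕ} {f : Euc n → ℂ} (hf : Continuous f) {r : Fin n → ℤ}
    {x : Euc n} (hx : x ∈ cube r) : ‖f x‖ ≤ supCube f r :=
  le_csSup (((isCompact_cube r).image (by fun_prop)).bddAbove) (Set.mem_image_of_mem _ hx)

lemma le_Mv {n : ℕ} {s : ℝ} (hs : 0 ≤ s) {z : Euc n} (hz : ∀ i, z i ∈ Set.Icc (0:ℝ) 1) :
    polyW s z ≤ Mv n s := by
  apply le_csSup _ (Set.mem_image_of_mem _
    (show z ∈ {z : Euc n | ∀ i, z i ∈ Set.Icc (0:ℝ) 1} from hz))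
  have : {z : Euc n | ∀ i, z i ∈ Set.Icc (0:ℝ) 1}
      = {x : Euc n | ∀ i, (0:ℝ) ≤ x i ∧ x i ≤ 1} := by ext; simp [Set.mem_Icc]
  rw [this]
  exact ((isCompact_boxSet _ _).image (continuous_polyW hs)).bddAbove

lemma Mv_nonneg {n : ℕ} {s : ℝ} (hs : 0 ≤ s) : 0 ≤ Mv n s :=
  le_trans (polyW_nonneg 0) (le_Mv hs (fun i => by norm_num [Set.mem_Icc]))

lemma polyW_le_Mv_mul {n : ℕ} {s : ℝ} (hs : 0 ≤ s) {r : Fin n → ℤ} {x : Euc n}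
    (hx : x ∈ cube r) :
    polyW s x ≤ Mv n s * polyW s (toE fun i => (r i : ℝ)) := by
  set rE : Euc n := toE fun i => (r i : ℝ) with hrE
  set z : Euc n := x - rE with hz
  have hzmem : ∀ i, z i ∈ Set.Icc (0:ℝ) 1 := by
    intro i
    have h1 := (hx i).1
    have h2 := (hx i).2
    have : z i = x i - (r i : ℝ) := by simp [hz, rE, toE]
    rw [this]
    constructor <;> [linarith; linarith]
  have hx' : x = rE + z := by simp [hz]
  have hnorm : ‖x‖ ≤ ‖rE‖ + ‖z‖ := by rw [hx']; exact norm_add_le _ _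
  have step1 : polyW s x ≤ ((1 + ‖rE‖) * (1 + ‖z‖)) ^ s := by
    apply Real.rpow_le_rpow (by positivity) _ hs
    have h0r : 0 ≤ ‖rE‖ := norm_nonneg _
    have h0z : 0 ≤ ‖z‖ := norm_nonneg _
    nlinarith
  calc polyW s x ≤ ((1 + ‖rE‖) * (1 + ‖z‖)) ^ s := step1
    _ = polyW s rE * polyW s z := by
        rw [Real.mul_rpow (by positivity) (by positivity)]; rfl
    _ ≤ polyW s rE * Mv n s := mul_le_mul_of_nonneg_left (le_Mv hs hzmem) (polyW_nonneg _)
    _ = Mv n s * polyW s rE := mul_comm _ _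

lemma fiber_card {n : ℕ} (L : Matrix (Fin n) (Fin n) ℝ) (hL : IsUnit L.det) (b : Fin n → ℤ) :
    ∃ t : Finset (Fin n → ℤ), t.card ≤ ∏ j, (⌊∑ i, |L⁻¹ j i|⌋ + 1).toNat ∧
      (fun κ : Fin n → ℤ => fun j => ⌊(L.mulVec fun i => ((κ i : ℝ))) j⌋) ⁻¹' {b} ⊆ ↑t := by
  set A := L⁻¹ with hA
  set c : Fin n → ℝ := fun j => ∑ i, |A j i| with hc
  set lo : Fin n → ℝ := fun j => ∑ i, (A j i * (b i : ℝ) + min 0 (A j i)) with hlo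
  refine ⟨Fintype.piFinset fun j => Finset.Icc ⌈lo j⌉ (⌈lo j⌉ + ⌊c j⌋), ?_, ?_⟩
  · apply le_of_eq
    rw [Fintype.card_piFinset]
    refine Finset.prod_congr rfl fun j _ => ?_
    rw [Int.card_Icc]
    congr 1
    ring
  · intro κ hκ
    simp only [Set.mem_preimage, Set.mem_singleton_iff] at hκ
    have hκj : ∀ j, ⌊(L.mulVec fun i => ((κ i : ℝ))) j⌋ = b j := fun j => congrFun hκ j
    set y : Fin n → ℝ := L.mulVec fun i => (κ i : ℝ) with hy'
    have hy : ∀ i, (b i : ℝ) ≤ y i ∧ y i ≤ (b i : ℝ) + 1 := fun i =>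
      ⟨by rw [← hκj i]; exact Int.floor_le _, by rw [← hκj i]; exact (Int.lt_floor_add_one _).le⟩
    have hrec : (fun i => (κ i : ℝ)) = A.mulVec y := by
      rw [hy', Matrix.mulVec_mulVec, hA, Matrix.nonsing_inv_mul L hL, Matrix.one_mulVec]
    have hκeq : ∀ j, (κ j : ℝ) = ∑ i, A j i * y i := fun j => by
      have h := congrFun hrec j
      simpa [Matrix.mulVec, dotProduct] using h
    have hbound : ∀ j, lo j ≤ (κ j : ℝ) ∧ (κ j : ℝ) ≤ lo j + c j := by
      intro j
      have hsum : lo j + c j = ∑ i, (A j i * (b i : ℝ) + min 0 (A j i) + |A j i|) := by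
        rw [hlo, hc]
        simp only
        rw [← Finset.sum_add_distrib]
      constructor
      · rw [hκeq j, hlo]
        refine Finset.sum_le_sum fun i _ => ?_
        rcases le_or_gt 0 (A j i) with h | h
        · simp only [min_eq_left h]
          nlinarith [(hy i).1]
        · simp only [min_eq_right h.le]
          nlinarith [(hy i).2]
      · rw [hκeq j, hsum]
        refine Finset.sum_le_sum fun i _ => ?_
        rcases le_or_gt 0 (A j i) with h | h
        · rw [min_eq_left h, abs_of_nonneg h]
          nlinarith [(hy i).2]
        · rw [min_eq_right h.le, abs_of_neg h]
          nlinarith [(hy i).1]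
    rw [Finset.mem_coe, Fintype.mem_piFinset]
    intro j
    rw [Finset.mem_Icc]
    refine ⟨Int.ceil_le.2 (hbound j).1, ?_⟩
    have h1 : (κ j : ℝ) ≤ (⌈lo j⌉ : ℝ) + c j :=
      le_trans (hbound j).2 (by have := Int.le_ceil (lo j); linarith)
    have h2 : κ j ≤ ⌊(⌈lo j⌉ : ℝ) + c j⌋ := Int.le_floor.2 h1
    rwa [Int.floor_intCast_add] at h2


/-- sampling inequality in weighted Wiener spaces: if `f` is continuous
with finite weighted Wiener norm `∑_r v(r) sup_{Q_r} |f| < ∞`, then for every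
invertible `L`, `∑_κ v(Lκ)|f(Lκ)| ≤ C_{L,v} ∑_r v(r) sup_{Q_r} |f|`, with
`C_{L,v} = M_v ∏ⱼ(⌊∑ᵢ |(L⁻¹)ⱼᵢ|⌋ + 1)`. -/
theorem stmt9 {n : ℕ} (s : ℝ) (hs : 0 ≤ s) (f : Euc n → ℂ) (hf : Continuous f)
    (hW : Summable fun r : Fin n → ℤ => polyW s (toE fun i => (r i : ℝ)) * supCube f r)
    (L : Matrix (Fin n) (Fin n) ℝ) (hL : IsUnit L.det) :
    Summable (fun κ : Fin n → ℤ =>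
        polyW s (toE (L.mulVec fun i => (κ i : ℝ)))
          * ‖f (toE (L.mulVec fun i => (κ i : ℝ)))‖)
    ∧ (∑' κ : Fin n → ℤ,
        polyW s (toE (L.mulVec fun i => (κ i : ℝ)))
          * ‖f (toE (L.mulVec fun i => (κ i : ℝ)))‖)
      ≤ (Mv n s * ∏ j : Fin n, ((⌊∑ i : Fin n, |L⁻¹ j i|⌋ : ℝ) + 1))
        * ∑' r : Fin n → ℤ, polyW s (toE fun i => (r i : ℝ)) * supCube f r := by
  classical
  set W : (Fin n → ℤ) → ℝ := fun r => polyW s (toE fun i => (r i : ℝ)) * supCube f r with hWdef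
  set T : (Fin n → ℤ) → ℝ := fun κ => polyW s (toE (L.mulVec fun i => (κ i : ℝ)))
      * ‖f (toE (L.mulVec fun i => (κ i : ℝ)))‖ with hTdef
  set g : (Fin n → ℤ) → (Fin n → ℤ) :=
    fun κ => fun j => ⌊(L.mulVec fun i => ((κ i : ℝ))) j⌋ with hgdef
  have hWnn : ∀ r, 0 ≤ W r := fun r => mul_nonneg (polyW_nonneg _) (supCube_nonneg f r)
  have hTnn : ∀ κ, 0 ≤ T κ := fun κ => mul_nonneg (polyW_nonneg _) (norm_nonneg _)
  have hmemcube : ∀ κ : Fin n → ℤ, toE (L.mulVec fun i => (κ i : ℝ)) ∈ cube (g κ) := by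
    intro κ j
    rw [toE_apply]
    exact ⟨Int.floor_le _, (Int.lt_floor_add_one _).le⟩
  have hkey : ∀ κ, T κ ≤ Mv n s * W (g κ) := by
    intro κ
    have h1 := polyW_le_Mv_mul hs (hmemcube κ)
    have h2 := norm_le_supCube hf (hmemcube κ)
    calc T κ ≤ (Mv n s * polyW s (toE fun i => ((g κ i : ℝ)))) * supCube f (g κ) :=
          mul_le_mul h1 h2 (norm_nonneg _) (mul_nonneg (Mv_nonneg hs) (polyW_nonneg _))
      _ = Mv n s * W (g κ) := mul_assoc _ _ _
  set N : ℕ := ∏ j, (⌊∑ i, |L⁻¹ j i|⌋ + 1).toNat with hNdef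
  set F : (Fin n → ℤ) → ℝ≥0∞ := fun κ => ENNReal.ofReal (T κ) with hFdef
  set G : (Fin n → ℤ) → ℝ≥0∞ := fun r => ENNReal.ofReal (W r) with hGdef
  have hGsum : ∑' r, G r = ENNReal.ofReal (∑' r, W r) :=
    (ENNReal.ofReal_tsum_of_nonneg hWnn hW).symm
  have hFle : ∑' κ, F κ ≤ ENNReal.ofReal (Mv n s) * ((N : ℝ≥0∞) * ∑' r, G r) := by
    calc ∑' κ, F κ ≤ ∑' κ, ENNReal.ofReal (Mv n s) * G (g κ) := by
          refine ENNReal.tsum_le_tsum fun κ => ?_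
          rw [← ENNReal.ofReal_mul (Mv_nonneg hs)]
          exact ENNReal.ofReal_le_ofReal (hkey κ)
      _ = ENNReal.ofReal (Mv n s) * ∑' κ, G (g κ) := ENNReal.tsum_mul_left
      _ ≤ _ := by
          gcongr
          exact counting g G N (fun b => fiber_card L hL b)
  have hRfin : ENNReal.ofReal (Mv n s) * ((N : ℝ≥0∞) * ∑' r, G r) ≠ ⊤ := by
    rw [hGsum]
    exact ENNReal.mul_ne_top ENNReal.ofReal_ne_top
      (ENNReal.mul_ne_top (ENNReal.natCast_ne_top N) ENNReal.ofReal_ne_top)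
  have hFfin : ∑' κ, F κ ≠ ⊤ := ne_top_of_le_ne_top hRfin hFle
  have hTsummable : Summable T := by
    refine (ENNReal.summable_toReal hFfin).congr fun κ => ?_
    simp [hFdef, ENNReal.toReal_ofReal (hTnn κ)]
  refine ⟨hTsummable, ?_⟩
  have hfloor_nn : ∀ j, (0:ℤ) ≤ ⌊∑ i, |L⁻¹ j i|⌋ := fun j =>
    Int.floor_nonneg.2 (Finset.sum_nonneg fun i _ => abs_nonneg _)
  have hNcast : (N : ℝ) = ∏ j, ((⌊∑ i, |L⁻¹ j i|⌋ : ℝ) + 1) := by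
    rw [hNdef, Nat.cast_prod]
    refine Finset.prod_congr rfl fun j _ => ?_
    have h0 : (0:ℤ) ≤ ⌊∑ i, |L⁻¹ j i|⌋ + 1 := by linarith [hfloor_nn j]
    rw [← Int.cast_natCast (R := ℝ), Int.toNat_of_nonneg h0]
    push_cast
    ring
  have hsum_eq : ENNReal.ofReal (∑' κ, T κ) = ∑' κ, F κ :=
    ENNReal.ofReal_tsum_of_nonneg hTnn hTsummable
  have hprod_nn : (0:ℝ) ≤ ∏ j, ((⌊∑ i, |L⁻¹ j i|⌋ : ℝ) + 1) := by
    rw [← hNcast]; positivity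
  have hsumW_nn : (0:ℝ) ≤ ∑' r, W r := tsum_nonneg hWnn
  have hofle : ENNReal.ofReal (∑' κ, T κ)
      ≤ ENNReal.ofReal ((Mv n s * ∏ j, ((⌊∑ i, |L⁻¹ j i|⌋ : ℝ) + 1)) * ∑' r, W r) := by
    rw [hsum_eq]
    refine le_trans hFle ?_
    rw [hGsum, ← hNcast]
    rw [← ENNReal.ofReal_natCast N, ← ENNReal.ofReal_mul (by positivity),
      ← ENNReal.ofReal_mul (Mv_nonneg hs)]
    apply ENNReal.ofReal_le_ofReal
    rw [← mul_assoc]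
  exact (ENNReal.ofReal_le_ofReal_iff
    (mul_nonneg (mul_nonneg (Mv_nonneg hs) hprod_nn) hsumW_nn)).1 hofle
end
end
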